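/- Let Φ ∈ L¹(ℝ) be nonnegative and suppose there exists C₀ > 0 such that ∫_{|t| ≥ R} Φ(t) dt ≤ C₀/R for all R ≥ 1. Then there exists a constant C > 0 (depending only on C₀ and ∫_ℝ Φ) such that for all ξ ∈ ℝ: ∫_ℝ |e^{2πi t ξ} − 1|² Φ(t) dt ≤ C |ξ|. -/

import Mathlib

open MeasureTheory

private lemma bal_norm_exp_sq_eq (θ : ℝ) :
    ‖Complex.exp (θ * Complex.I) - 1‖ ^ 2 = 2 - 2 * Real.cos θ := by
  rw [Complex.exp_mul_I]
  rw [show ‖Complex.cos θ + Complex.sin θ * Complex.I - 1‖ ^ 2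
      = Complex.normSq (Complex.cos θ + Complex.sin θ * Complex.I - 1) by
    rw [Complex.sq_norm]]
  simp [Complex.normSq_apply, Complex.cos_ofReal_re, Complex.sin_ofReal_re,
    Complex.sin_ofReal_im, Complex.add_re, Complex.sub_re]
  nlinarith [Real.sin_sq_add_cos_sq θ]

private lemma bal_norm_exp_sq_le (θ : ℝ) :
    ‖Complex.exp (θ * Complex.I) - 1‖ ^ 2 ≤ θ ^ 2 := by
  rw [bal_norm_exp_sq_eq]
  have h1 : Real.cos θ = 2 * Real.cos (θ/2) ^ 2 - 1 := by
    rw [← Real.cos_two_mul]; ring_nf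
  nlinarith [Real.sin_sq_le_sq (x := θ/2), Real.sin_sq_add_cos_sq (θ/2)]

private lemma bal_norm_exp_sq_le4 (θ : ℝ) :
    ‖Complex.exp (θ * Complex.I) - 1‖ ^ 2 ≤ 4 := by
  rw [bal_norm_exp_sq_eq]
  nlinarith [Real.neg_one_le_cos θ]

private lemma bal_meas_lt (M : ℝ) : MeasurableSet {t : ℝ | |t| < M} :=
  (isOpen_lt continuous_abs continuous_const).measurableSet

private lemma bal_meas_ge (M : ℝ) : MeasurableSet {t : ℝ | M ≤ |t|} :=
  (isClosed_le continuous_const continuous_abs).measurableSet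

private lemma bal_t2_meas (Φ : ℝ → ℝ) (hΦ_int : Integrable Φ) :
    AEStronglyMeasurable (fun t : ℝ => t ^ 2 * Φ t) volume :=
  ((continuous_pow 2).aestronglyMeasurable).mul hΦ_int.aestronglyMeasurable

private lemma bal_t2_intOn (Φ : ℝ → ℝ) (hΦ_int : Integrable Φ) (hΦ_nonneg : ∀ t, 0 ≤ Φ t)
    (M : ℝ) : IntegrableOn (fun t : ℝ => t ^ 2 * Φ t) {t : ℝ | |t| < M} := by
  refine ((hΦ_int.restrict).const_mul (M ^ 2)).mono
    ((bal_t2_meas Φ hΦ_int).restrict) ?_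
  refine Filter.eventually_of_mem (self_mem_ae_restrict (bal_meas_lt M)) ?_
  intro t ht
  simp only [Set.mem_setOf_eq] at ht
  have h1 : t ^ 2 ≤ M ^ 2 := by nlinarith [abs_nonneg t, sq_abs t]
  rw [Real.norm_eq_abs, Real.norm_eq_abs,
    abs_of_nonneg (mul_nonneg (sq_nonneg t) (hΦ_nonneg t)),
    abs_of_nonneg (mul_nonneg (by nlinarith [abs_nonneg t] : (0:ℝ) ≤ M ^ 2) (hΦ_nonneg t))]
  exact mul_le_mul_of_nonneg_right h1 (hΦ_nonneg t)

private lemma bal_dyadic (Φ : ℝ → ℝ) (hΦ_int : Integrable Φ) (hΦ_nonneg : ∀ t, 0 ≤ Φ t)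
    (C₀ : ℝ) (hC₀ : 0 < C₀)
    (hΦ_tail : ∀ R ≥ (1:ℝ), (∫ t in {t : ℝ | R ≤ |t|}, Φ t) ≤ C₀ / R) (k : ℕ) :
    (∫ t in {t : ℝ | |t| < 2 ^ k}, t ^ 2 * Φ t) ≤ (∫ t, Φ t) + 4 * C₀ * 2 ^ k := by
  induction k with
  | zero =>
    have h1 : (∫ t in {t : ℝ | |t| < 2 ^ (0:ℕ)}, t ^ 2 * Φ t)
        ≤ ∫ t in {t : ℝ | |t| < 2 ^ (0:ℕ)}, Φ t := by
      refine setIntegral_mono_on (bal_t2_intOn Φ hΦ_int hΦ_nonneg _)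
        hΦ_int.integrableOn (bal_meas_lt _) ?_
      intro t ht
      simp only [Set.mem_setOf_eq, pow_zero] at ht
      have : t ^ 2 ≤ 1 := by nlinarith [abs_nonneg t, sq_abs t]
      nlinarith [hΦ_nonneg t]
    have h2 : (∫ t in {t : ℝ | |t| < 2 ^ (0:ℕ)}, Φ t) ≤ ∫ t, Φ t :=
      setIntegral_le_integral hΦ_int (Filter.Eventually.of_forall hΦ_nonneg)
    simp only [pow_zero] at *
    linarith
  | succ k ih =>
    set s := {t : ℝ | |t| < 2 ^ k} with hs
    set u := {t : ℝ | 2 ^ k ≤ |t| ∧ |t| < 2 ^ (k+1)} with hu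
    have hu_meas : MeasurableSet u := (bal_meas_ge _).inter (bal_meas_lt _)
    have hsu : {t : ℝ | |t| < 2 ^ (k+1)} = s ∪ u := by
      ext t
      simp only [hs, hu, Set.mem_setOf_eq, Set.mem_union]
      constructor
      · intro h
        rcases lt_or_ge |t| (2 ^ k) with h' | h'
        · exact Or.inl h'
        · exact Or.inr ⟨h', h⟩
      · rintro (h | ⟨-, h⟩)
        · exact h.trans_le (pow_le_pow_right₀ (by norm_num) (Nat.le_succ k))
        · exact h
    have hdisj : Disjoint s u := by
      rw [Set.disjoint_left]
      intro t hts htu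
      exact absurd htu.1 (not_le.mpr hts)
    have hu_sub : u ⊆ {t : ℝ | |t| < 2 ^ (k+1)} := fun t ht => ht.2
    have hIntU : IntegrableOn (fun t : ℝ => t ^ 2 * Φ t) u :=
      (bal_t2_intOn Φ hΦ_int hΦ_nonneg (2 ^ (k+1))).mono_set hu_sub
    have hsplit : (∫ t in {t : ℝ | |t| < 2 ^ (k+1)}, t ^ 2 * Φ t)
        = (∫ t in s, t ^ 2 * Φ t) + ∫ t in u, t ^ 2 * Φ t := by
      rw [hsu]
      exact setIntegral_union hdisj hu_meas (bal_t2_intOn Φ hΦ_int hΦ_nonneg _) hIntU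
    have hub : (∫ t in u, t ^ 2 * Φ t) ≤ 4 * C₀ * 2 ^ k := by
      have h1 : (∫ t in u, t ^ 2 * Φ t) ≤ ∫ t in u, ((2:ℝ) ^ (k+1)) ^ 2 * Φ t := by
        refine setIntegral_mono_on hIntU (hΦ_int.const_mul _).integrableOn hu_meas ?_
        intro t ht
        have h2 : t ^ 2 ≤ ((2:ℝ) ^ (k+1)) ^ 2 := by
          nlinarith [abs_nonneg t, sq_abs t, ht.2]
        exact mul_le_mul_of_nonneg_right h2 (hΦ_nonneg t)
      have h3 : (∫ t in u, ((2:ℝ) ^ (k+1)) ^ 2 * Φ t)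
          = ((2:ℝ) ^ (k+1)) ^ 2 * ∫ t in u, Φ t := integral_const_mul _ _
      have h4 : (∫ t in u, Φ t) ≤ ∫ t in {t : ℝ | (2:ℝ) ^ k ≤ |t|}, Φ t := by
        refine setIntegral_mono_set hΦ_int.integrableOn
          (ae_restrict_of_ae (Filter.Eventually.of_forall hΦ_nonneg)) ?_
        exact (Set.setOf_subset_setOf.mpr (fun t ht => ht.1)).eventuallyLE
      have h5 : (∫ t in {t : ℝ | (2:ℝ) ^ k ≤ |t|}, Φ t) ≤ C₀ / 2 ^ k :=
        hΦ_tail _ (one_le_pow₀ (by norm_num))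
      have hne : (2:ℝ) ^ k ≠ 0 := by positivity
      have h6 : ((2:ℝ) ^ (k+1)) ^ 2 * (C₀ / 2 ^ k) = 4 * C₀ * 2 ^ k := by
        field_simp
        ring
      have h7 : (0:ℝ) ≤ ((2:ℝ) ^ (k+1)) ^ 2 := by positivity
      calc (∫ t in u, t ^ 2 * Φ t) ≤ ((2:ℝ) ^ (k+1)) ^ 2 * ∫ t in u, Φ t := by
            rw [← h3]; exact h1
        _ ≤ ((2:ℝ) ^ (k+1)) ^ 2 * (C₀ / 2 ^ k) :=
            mul_le_mul_of_nonneg_left (h4.trans h5) h7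
        _ = 4 * C₀ * 2 ^ k := h6
    have h8 : (2:ℝ) ^ (k+1) = 2 * 2 ^ k := by ring
    rw [hsplit, h8]
    linarith

private lemma bal_pow_choice (R : ℝ) (hR : 1 ≤ R) :
    ∃ k : ℕ, R ≤ 2 ^ k ∧ (2:ℝ) ^ k ≤ 2 * R := by
  have h2 : (1:ℕ) < 2 := one_lt_two
  have hR0 : (0:ℝ) < R := by linarith
  have hn : Int.log 2 R = ((Nat.log 2 ⌊R⌋₊ : ℕ) : ℤ) := Int.log_of_one_le_right 2 hR
  set n := Nat.log 2 ⌊R⌋₊ with hn'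
  refine ⟨n + 1, ?_, ?_⟩
  · have h := Int.lt_zpow_succ_log_self (b := 2) h2 R
    rw [hn, show ((n:ℤ)+1) = ((n+1 : ℕ) : ℤ) by push_cast; ring, zpow_natCast] at h
    push_cast at h
    exact h.le
  · have h := Int.zpow_log_le_self (b := 2) h2 hR0
    rw [hn, zpow_natCast] at h
    push_cast at h
    have e : (2:ℝ) ^ (n+1) = 2 * 2 ^ n := by ring
    rw [e]; linarith

open MeasureTheory in
/-- If `Φ ≥ 0` is integrable with `∫_{|t| ≥ R} Φ ≤ C₀/R` for `R ≥ 1`, then there is `C > 0`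
with `∫ |e^{2πitξ} - 1|² Φ(t) dt ≤ C|ξ|` for all `ξ`. -/
theorem balanced_rigidity_stmt13
    (Φ : ℝ → ℝ) (hΦ_int : Integrable Φ) (hΦ_nonneg : ∀ t, 0 ≤ Φ t)
    (C₀ : ℝ) (hC₀ : 0 < C₀)
    (hΦ_tail : ∀ R ≥ (1 : ℝ), (∫ t in {t : ℝ | R ≤ |t|}, Φ t) ≤ C₀ / R) :
    ∃ C > (0 : ℝ), ∀ ξ : ℝ,
      (∫ t : ℝ, ‖Complex.exp (2 * Real.pi * t * ξ * Complex.I) - 1‖ ^ 2 * Φ t)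
        ≤ C * |ξ| := by
  have hI0 : 0 ≤ ∫ t, Φ t := integral_nonneg hΦ_nonneg
  set I := ∫ t, Φ t with hIdef
  refine ⟨4 * Real.pi ^ 2 * I + 32 * Real.pi ^ 2 * C₀ + 4 * C₀ + 4 * I + 1, ?_, fun ξ => ?_⟩
  · nlinarith [sq_nonneg Real.pi]
  set C : ℝ := 4 * Real.pi ^ 2 * I + 32 * Real.pi ^ 2 * C₀ + 4 * C₀ + 4 * I + 1 with hCdef
  set f : ℝ → ℝ :=
    fun t => ‖Complex.exp (2 * Real.pi * t * ξ * Complex.I) - 1‖ ^ 2 * Φ t with hfdef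
  have harg : ∀ t : ℝ, (2 * (Real.pi:ℂ) * t * ξ * Complex.I)
      = ((2 * Real.pi * t * ξ : ℝ) : ℂ) * Complex.I := by
    intro t; push_cast; ring
  have hf4 : ∀ t, f t ≤ 4 * Φ t := by
    intro t
    simp only [hfdef]
    refine mul_le_mul_of_nonneg_right ?_ (hΦ_nonneg t)
    rw [harg t]
    exact bal_norm_exp_sq_le4 _
  have hf0 : ∀ t, 0 ≤ f t := fun t => mul_nonneg (sq_nonneg _) (hΦ_nonneg t)
  have hfsq : ∀ t, f t ≤ 4 * Real.pi ^ 2 * ξ ^ 2 * (t ^ 2 * Φ t) := by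
    intro t
    have h1 : f t ≤ (2 * Real.pi * t * ξ) ^ 2 * Φ t := by
      simp only [hfdef]
      refine mul_le_mul_of_nonneg_right ?_ (hΦ_nonneg t)
      rw [harg t]
      exact bal_norm_exp_sq_le _
    have h2 : (2 * Real.pi * t * ξ) ^ 2 * Φ t
        = 4 * Real.pi ^ 2 * ξ ^ 2 * (t ^ 2 * Φ t) := by ring
    linarith [h1, h2.le]
  have hf_meas : AEStronglyMeasurable f volume := by
    refine AEStronglyMeasurable.mul ?_ hΦ_int.aestronglyMeasurable
    refine Continuous.aestronglyMeasurable ?_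
    fun_prop
  have hf_int : Integrable f := by
    refine (hΦ_int.const_mul 4).mono hf_meas ?_
    refine Filter.Eventually.of_forall fun t => ?_
    rw [Real.norm_eq_abs, Real.norm_eq_abs, abs_of_nonneg (hf0 t),
      abs_of_nonneg (by nlinarith [hΦ_nonneg t] : (0:ℝ) ≤ 4 * Φ t)]
    exact hf4 t
  rcases eq_or_ne ξ 0 with h0 | h0
  · subst h0
    have hz : ∀ t : ℝ, f t = 0 := by
      intro t
      simp [hfdef]
    rw [show (∫ t, f t) = 0 by simp [hz]]
    simp
  rcases le_or_gt 1 |ξ| with hξ1 | hξ1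
  · have h1 : (∫ t, f t) ≤ ∫ t, 4 * Φ t :=
      integral_mono hf_int (hΦ_int.const_mul 4) hf4
    have h2 : (∫ t, 4 * Φ t) = 4 * I := integral_const_mul _ _
    have h3 : 4 * I ≤ 4 * I * |ξ| := le_mul_of_one_le_right (by linarith) hξ1
    have h4 : 4 * I * |ξ| ≤ C * |ξ| := by
      refine mul_le_mul_of_nonneg_right ?_ (abs_nonneg ξ)
      nlinarith [sq_nonneg Real.pi]
    linarith
  · have ha : 0 < |ξ| := abs_pos.mpr h0
    have hR : 1 ≤ 1 / |ξ| := by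
      rw [le_div_iff₀ ha]; linarith
    obtain ⟨k, hk1, hk2⟩ := bal_pow_choice (1 / |ξ|) hR
    have hk1' : 1 ≤ |ξ| * 2 ^ k := by
      rw [div_le_iff₀ ha] at hk1
      linarith [hk1]
    have hk2' : 2 ^ k * |ξ| ≤ 2 := by
      have := mul_le_mul_of_nonneg_right hk2 ha.le
      calc (2:ℝ) ^ k * |ξ| ≤ 2 * (1 / |ξ|) * |ξ| := this
        _ = 2 := by field_simp
    have hsplit : (∫ t in {t : ℝ | |t| < 2 ^ k}, f t)
        + (∫ t in {t : ℝ | |t| < 2 ^ k}ᶜ, f t) = ∫ t, f t :=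
      integral_add_compl (bal_meas_lt ((2:ℝ) ^ k)) hf_int
    have hcompl : {t : ℝ | |t| < 2 ^ k}ᶜ = {t : ℝ | (2:ℝ) ^ k ≤ |t|} := by
      ext t; simp [not_lt]
    have hone_le : (1:ℝ) ≤ 2 ^ k := one_le_pow₀ (by norm_num)
    have h_in : (∫ t in {t : ℝ | |t| < 2 ^ k}, f t)
        ≤ 4 * Real.pi ^ 2 * ξ ^ 2 * (I + 4 * C₀ * 2 ^ k) := by
      have b1 : (∫ t in {t : ℝ | |t| < 2 ^ k}, f t)
          ≤ ∫ t in {t : ℝ | |t| < 2 ^ k}, 4 * Real.pi ^ 2 * ξ ^ 2 * (t ^ 2 * Φ t) := by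
        refine setIntegral_mono_on hf_int.integrableOn
          ((bal_t2_intOn Φ hΦ_int hΦ_nonneg _).const_mul _) (bal_meas_lt _) ?_
        exact fun t _ => hfsq t
      have b2 : (∫ t in {t : ℝ | |t| < 2 ^ k}, 4 * Real.pi ^ 2 * ξ ^ 2 * (t ^ 2 * Φ t))
          = 4 * Real.pi ^ 2 * ξ ^ 2 * ∫ t in {t : ℝ | |t| < 2 ^ k}, t ^ 2 * Φ t :=
        integral_const_mul _ _
      have b3 := bal_dyadic Φ hΦ_int hΦ_nonneg C₀ hC₀ hΦ_tail k
      have b4 : (0:ℝ) ≤ 4 * Real.pi ^ 2 * ξ ^ 2 := by positivity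
      calc (∫ t in {t : ℝ | |t| < 2 ^ k}, f t)
          ≤ 4 * Real.pi ^ 2 * ξ ^ 2 * ∫ t in {t : ℝ | |t| < 2 ^ k}, t ^ 2 * Φ t := by
            rw [← b2]; exact b1
        _ ≤ 4 * Real.pi ^ 2 * ξ ^ 2 * (I + 4 * C₀ * 2 ^ k) :=
            mul_le_mul_of_nonneg_left b3 b4
    have h_out : (∫ t in {t : ℝ | |t| < 2 ^ k}ᶜ, f t) ≤ 4 * (C₀ / 2 ^ k) := by
      rw [hcompl]
      have b1 : (∫ t in {t : ℝ | (2:ℝ) ^ k ≤ |t|}, f t)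
          ≤ ∫ t in {t : ℝ | (2:ℝ) ^ k ≤ |t|}, 4 * Φ t :=
        setIntegral_mono_on hf_int.integrableOn (hΦ_int.const_mul 4).integrableOn
          (bal_meas_ge _) (fun t _ => hf4 t)
      have b2 : (∫ t in {t : ℝ | (2:ℝ) ^ k ≤ |t|}, 4 * Φ t)
          = 4 * ∫ t in {t : ℝ | (2:ℝ) ^ k ≤ |t|}, Φ t := integral_const_mul _ _
      have b3 := hΦ_tail ((2:ℝ) ^ k) hone_le
      calc (∫ t in {t : ℝ | (2:ℝ) ^ k ≤ |t|}, f t)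
          ≤ 4 * ∫ t in {t : ℝ | (2:ℝ) ^ k ≤ |t|}, Φ t := by rw [← b2]; exact b1
        _ ≤ 4 * (C₀ / 2 ^ k) := by linarith
    -- final numeric bounds
    have e1 : C₀ / 2 ^ k ≤ C₀ * |ξ| := by
      rw [div_le_iff₀ (by positivity : (0:ℝ) < 2 ^ k)]
      nlinarith [hk1', hC₀.le]
    have e2 : ξ ^ 2 ≤ |ξ| := by nlinarith [sq_abs ξ, ha, hξ1]
    have e3 : ξ ^ 2 * 2 ^ k ≤ 2 * |ξ| := by
      nlinarith [sq_abs ξ, hk2', ha.le]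
    have hπ2 : (0:ℝ) ≤ Real.pi ^ 2 := sq_nonneg _
    have g1 : 4 * Real.pi ^ 2 * ξ ^ 2 * (I + 4 * C₀ * 2 ^ k)
        = 4 * Real.pi ^ 2 * I * ξ ^ 2 + 16 * Real.pi ^ 2 * C₀ * (ξ ^ 2 * 2 ^ k) := by ring
    have g2 : 4 * Real.pi ^ 2 * I * ξ ^ 2 ≤ 4 * Real.pi ^ 2 * I * |ξ| :=
      mul_le_mul_of_nonneg_left e2 (by positivity)
    have g3 : 16 * Real.pi ^ 2 * C₀ * (ξ ^ 2 * 2 ^ k) ≤ 16 * Real.pi ^ 2 * C₀ * (2 * |ξ|) :=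
      mul_le_mul_of_nonneg_left e3 (by positivity)
    have g4 : 4 * (C₀ / 2 ^ k) ≤ 4 * (C₀ * |ξ|) := by linarith
    have hfinal : (∫ t, f t)
        ≤ 4 * Real.pi ^ 2 * I * |ξ| + 32 * Real.pi ^ 2 * C₀ * |ξ| + 4 * C₀ * |ξ| := by
      linarith [hsplit, h_in, h_out, g1.le, g1.ge, g2, g3, g4]
    have : 4 * Real.pi ^ 2 * I * |ξ| + 32 * Real.pi ^ 2 * C₀ * |ξ| + 4 * C₀ * |ξ|
        ≤ C * |ξ| := by
      rw [hCdef]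
      have g5 : 0 ≤ (4 * I + 1) * |ξ| := mul_nonneg (by linarith) (abs_nonneg ξ)
      nlinarith [g5]
    linarith
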